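/- Assume q ≥ 2, ν(∅) = 0, and that the matrix J = E_{Z∼p}[W(Z)W(Z)ᵀ] is invertible. With I = E_{Z∼p}[(ν(Z) − Z_q ν(1) − W(Z)ᵀ φ̃)² · W(Z)W(Z)ᵀ], I₂ = E_{Z∼p}[4·((ν(Z) + ν(1) − ν(1−Z))/2 − Z_q ν(1) − W(Z)ᵀ φ̃)² · W(Z)W(Z)ᵀ], and J₂ = 2J, the difference of asymptotic covariance matrices T − T₂ = J⁻¹ I J⁻¹ − J₂⁻¹ I₂ J₂⁻¹ is positive semidefinite. -/

import Mathlib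

open Finset

/-- Shapley value of player `j` for value function `ν` on coalitions of `Fin q`. -/
noncomputable def shapley {q : ℕ} (ν : Finset (Fin q) → ℝ) (j : Fin q) : ℝ :=
  ((q : ℝ))⁻¹ * ∑ C ∈ (Finset.univ.erase j).powerset,
    (((q - 1).choose C.card : ℝ))⁻¹ * (ν (insert j C) - ν C)

/-- The set of nonempty proper coalitions of `Fin q`. -/
def properCoalitions (q : ℕ) : Finset (Finset (Fin q)) :=
  Finset.univ.powerset.filter
    (fun C : Finset (Fin q) => C.Nonempty ∧ C ≠ Finset.univ)

/-- Shapley kernel weight of a coalition. -/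
noncomputable def kernelWeight (q : ℕ) (C : Finset (Fin q)) : ℝ :=
  ((q : ℝ) - 1) /
    ((q.choose C.card : ℝ) * (C.card : ℝ) * ((q : ℝ) - (C.card : ℝ)))

/-- Normalized Shapley kernel probability weights. -/
noncomputable def kernelProb (q : ℕ) (C : Finset (Fin q)) : ℝ :=
  kernelWeight q C / ∑ C' ∈ properCoalitions q, kernelWeight q C'

/-- The last player `q` (index `q - 1` in `Fin q`). -/
def lastPlayer (q : ℕ) (hq : 2 ≤ q) : Fin q := ⟨q - 1, by omega⟩

/-- Indicator `Z_q` of the last player belonging to the coalition `C`. -/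
noncomputable def Zlast (q : ℕ) (hq : 2 ≤ q) (C : Finset (Fin q)) : ℝ :=
  if lastPlayer q hq ∈ C then 1 else 0

/-- The vector `W(Z) = Z̃ - Z_q · 1̃ ∈ ℝ^{q-1}` for the coalition `C` with
indicator vector `Z`. -/
noncomputable def Wvec (q : ℕ) (hq : 2 ≤ q) (C : Finset (Fin q))
    (i : Fin (q - 1)) : ℝ :=
  (if Fin.castLE (Nat.sub_le q 1) i ∈ C then (1 : ℝ) else 0) - Zlast q hq C

/-- The first `q - 1` Shapley values `φ̃ ∈ ℝ^{q-1}`. -/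
noncomputable def shapleyTrunc (q : ℕ) (ν : Finset (Fin q) → ℝ)
    (i : Fin (q - 1)) : ℝ :=
  shapley ν (Fin.castLE (Nat.sub_le q 1) i)

/-- The shapResidual `ν(Z) - Z_q ν(1) - W(Z)ᵀ φ̃`. -/
noncomputable def shapResidual (q : ℕ) (hq : 2 ≤ q) (ν : Finset (Fin q) → ℝ)
    (C : Finset (Fin q)) : ℝ :=
  ν C - Zlast q hq C * ν Finset.univ
    - ∑ i, Wvec q hq C i * shapleyTrunc q ν i

/-- The paired shapResidual `(ν(Z) + ν(1) - ν(1 - Z))/2 - Z_q ν(1) - W(Z)ᵀ φ̃`. -/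
noncomputable def pairedResidual (q : ℕ) (hq : 2 ≤ q) (ν : Finset (Fin q) → ℝ)
    (C : Finset (Fin q)) : ℝ :=
  (ν C + ν Finset.univ - ν (Finset.univ \ C)) / 2
    - Zlast q hq C * ν Finset.univ
    - ∑ i, Wvec q hq C i * shapleyTrunc q ν i

/-- The matrix `ℐ = E_{Z ∼ p}[(ν(Z) - Z_q ν(1) - W(Z)ᵀφ̃)² W(Z) W(Z)ᵀ]`. -/
noncomputable def Imat (q : ℕ) (hq : 2 ≤ q) (ν : Finset (Fin q) → ℝ) :
    Matrix (Fin (q - 1)) (Fin (q - 1)) ℝ :=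
  ∑ C ∈ properCoalitions q, kernelProb q C •
    Matrix.of (fun a b =>
      (shapResidual q hq ν C) ^ 2 * (Wvec q hq C a * Wvec q hq C b))

/-- The matrix `ℐ₂` built from the paired residuals (with factor `4`). -/
noncomputable def I2mat (q : ℕ) (hq : 2 ≤ q) (ν : Finset (Fin q) → ℝ) :
    Matrix (Fin (q - 1)) (Fin (q - 1)) ℝ :=
  ∑ C ∈ properCoalitions q, kernelProb q C •
    Matrix.of (fun a b =>
      4 * (pairedResidual q hq ν C) ^ 2 * (Wvec q hq C a * Wvec q hq C b))

/-- The matrix `𝒥 = E_{Z ∼ p}[W(Z) W(Z)ᵀ]`. -/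
noncomputable def Jmat (q : ℕ) (hq : 2 ≤ q) :
    Matrix (Fin (q - 1)) (Fin (q - 1)) ℝ :=
  ∑ C ∈ properCoalitions q, kernelProb q C •
    Matrix.of (fun a b => Wvec q hq C a * Wvec q hq C b)

/-! ### Auxiliary lemmas -/

section Aux

open Matrix

variable {q : ℕ}

lemma mem_proper_iff {C : Finset (Fin q)} :
    C ∈ properCoalitions q ↔ C.Nonempty ∧ C ≠ Finset.univ := by
  simp [properCoalitions]

lemma compl_mem_proper {C : Finset (Fin q)} (h : C ∈ properCoalitions q) :
    Finset.univ \ C ∈ properCoalitions q := by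
  rw [mem_proper_iff] at h ⊢
  obtain ⟨h1, h2⟩ := h
  constructor
  · have : ¬ ∀ x : Fin q, x ∈ C := fun h => h2 (Finset.eq_univ_iff_forall.mpr h)
    push_neg at this
    obtain ⟨x, hx⟩ := this
    exact ⟨x, by simp [hx]⟩
  · intro hc
    obtain ⟨y, hy⟩ := h1
    have : y ∈ Finset.univ \ C := by rw [hc]; exact Finset.mem_univ y
    simp [hy] at this

lemma compl_compl' (C : Finset (Fin q)) : Finset.univ \ (Finset.univ \ C) = C := by
  simp [Finset.sdiff_sdiff_self_left]

lemma card_compl' (C : Finset (Fin q)) :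
    (Finset.univ \ C).card = q - C.card := by
  rw [Finset.card_sdiff_of_subset (Finset.subset_univ C)]
  simp

lemma kernelWeight_nonneg (hq : 2 ≤ q) (C : Finset (Fin q)) :
    0 ≤ kernelWeight q C := by
  have hc : (C.card : ℝ) ≤ q := by
    exact_mod_cast (Finset.card_le_univ C).trans (by simp)
  apply div_nonneg
  · have : (2 : ℝ) ≤ q := by exact_mod_cast hq
    linarith
  · have h1 : (0:ℝ) ≤ (q.choose C.card : ℝ) := Nat.cast_nonneg _
    have h2 : (0:ℝ) ≤ (C.card : ℝ) := Nat.cast_nonneg _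
    have h3 : (0:ℝ) ≤ (q:ℝ) - (C.card : ℝ) := by linarith
    exact mul_nonneg (mul_nonneg h1 h2) h3

lemma kernelProb_nonneg (hq : 2 ≤ q) (C : Finset (Fin q)) :
    0 ≤ kernelProb q C :=
  div_nonneg (kernelWeight_nonneg hq C)
    (Finset.sum_nonneg fun C' _ => kernelWeight_nonneg hq C')

lemma kernelWeight_compl (hq : 2 ≤ q) {C : Finset (Fin q)}
    (h : C ∈ properCoalitions q) :
    kernelWeight q (Finset.univ \ C) = kernelWeight q C := by
  obtain ⟨h1, h2⟩ := mem_proper_iff.mp h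
  have hk1 : 1 ≤ C.card := Finset.card_pos.mpr h1
  have hk2 : C.card < q := by
    have := Finset.card_lt_card (Finset.ssubset_univ_iff.mpr h2)
    simpa using this
  unfold kernelWeight
  rw [card_compl', Nat.choose_symm hk2.le]
  have hcast : ((q - C.card : ℕ) : ℝ) = (q : ℝ) - (C.card : ℝ) := by
    push_cast [Nat.cast_sub hk2.le]; ring
  rw [hcast]
  ring_nf

lemma kernelProb_compl (hq : 2 ≤ q) {C : Finset (Fin q)}
    (h : C ∈ properCoalitions q) :
    kernelProb q (Finset.univ \ C) = kernelProb q C := by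
  unfold kernelProb
  rw [kernelWeight_compl hq h]

lemma Zlast_compl (hq : 2 ≤ q) (C : Finset (Fin q)) :
    Zlast q hq (Finset.univ \ C) = 1 - Zlast q hq C := by
  by_cases h : lastPlayer q hq ∈ C <;> simp [Zlast, h]

lemma Wvec_compl (hq : 2 ≤ q) (C : Finset (Fin q)) (i : Fin (q - 1)) :
    Wvec q hq (Finset.univ \ C) i = - Wvec q hq C i := by
  by_cases h : Fin.castLE (Nat.sub_le q 1) i ∈ C <;>
    by_cases h' : lastPlayer q hq ∈ C <;>
    simp [Wvec, Zlast, h, h']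

lemma pairedResidual_eq (hq : 2 ≤ q) (ν : Finset (Fin q) → ℝ)
    (C : Finset (Fin q)) :
    pairedResidual q hq ν C
      = (shapResidual q hq ν C - shapResidual q hq ν (Finset.univ \ C)) / 2 := by
  unfold pairedResidual shapResidual
  rw [Zlast_compl]
  have hsum : ∑ i, Wvec q hq (Finset.univ \ C) i * shapleyTrunc q ν i
      = - ∑ i, Wvec q hq C i * shapleyTrunc q ν i := by
    rw [← Finset.sum_neg_distrib]
    exact Finset.sum_congr rfl fun i _ => by rw [Wvec_compl]; ring
  rw [hsum]
  ring

lemma sum_compl_reindex (g : Finset (Fin q) → ℝ) :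
    ∑ C ∈ properCoalitions q, g C
      = ∑ C ∈ properCoalitions q, g (Finset.univ \ C) := by
  refine Finset.sum_nbij' (fun C => Finset.univ \ C) (fun C => Finset.univ \ C)
    (fun C hC => compl_mem_proper hC) (fun C hC => compl_mem_proper hC)
    (fun C _ => compl_compl' C) (fun C _ => compl_compl' C)
    (fun C _ => by rw [compl_compl'])

lemma dot_sum_mulVec {n : Type*} [Fintype n] [DecidableEq n] {ι : Type*}
    (s : Finset ι) (M : ι → Matrix n n ℝ) (x : n → ℝ) :
    x ⬝ᵥ ((∑ C ∈ s, M C) *ᵥ x) = ∑ C ∈ s, x ⬝ᵥ (M C *ᵥ x) := by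
  classical
  induction s using Finset.induction_on with
  | empty => simp
  | insert _ _ h ih =>
      rw [Finset.sum_insert h, Matrix.add_mulVec, dotProduct_add, ih,
        Finset.sum_insert h]

lemma quad_single {m : ℕ} (k c : ℝ) (w x : Fin m → ℝ) :
    x ⬝ᵥ ((k • Matrix.of (fun a b => c * (w a * w b))) *ᵥ x)
      = k * c * (∑ i, w i * x i) ^ 2 := by
  simp only [Matrix.mulVec, dotProduct, Matrix.smul_apply, Matrix.of_apply,
    smul_eq_mul, Finset.mul_sum]
  rw [sq, Finset.sum_mul_sum, Finset.mul_sum]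
  refine Finset.sum_congr rfl fun a _ => ?_
  rw [Finset.mul_sum]
  exact Finset.sum_congr rfl fun b _ => by ring

lemma isHermitian_gen {n : Type*} [Fintype n] {ι : Type*}
    (s : Finset ι) (k : ι → ℝ) (g : ι → n → n → ℝ)
    (hg : ∀ C a b, g C a b = g C b a) :
    (∑ C ∈ s, k C • (Matrix.of (g C) : Matrix n n ℝ)).IsHermitian := by
  show _ = _
  ext a b
  simp only [Matrix.conjTranspose_apply, Matrix.sum_apply, Matrix.smul_apply,
    Matrix.of_apply, star_trivial]
  exact Finset.sum_congr rfl fun C _ => by rw [hg C b a]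

end Aux

open Matrix

/-- the difference of the asymptotic covariance matrices
`𝒯 - 𝒯₂ = 𝒥⁻¹ ℐ 𝒥⁻¹ - 𝒥₂⁻¹ ℐ₂ 𝒥₂⁻¹` is positive semidefinite. -/
theorem covariance_difference_posSemidef (q : ℕ) (hq : 2 ≤ q)
    (ν : Finset (Fin q) → ℝ) (hν : ν ∅ = 0)
    (hJ : IsUnit (Jmat q hq)) :
    ((Jmat q hq)⁻¹ * Imat q hq ν * (Jmat q hq)⁻¹
      - ((2 : ℝ) • Jmat q hq)⁻¹ * I2mat q hq ν * ((2 : ℝ) • Jmat q hq)⁻¹).PosSemidef := by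
  classical
  set J := Jmat q hq with hJdef
  set I := Imat q hq ν with hIdef
  set I2 := I2mat q hq ν with hI2def
  have hJdet : IsUnit J.det := (Matrix.isUnit_iff_isUnit_det J).mp hJ
  -- J is Hermitian, hence so is J⁻¹
  have hJherm : J.IsHermitian := by
    rw [hJdef]
    exact isHermitian_gen _ _ _ (fun C a b => by ring)
  have hJinvH : (J⁻¹)ᴴ = J⁻¹ := by
    rw [Matrix.conjTranspose_nonsing_inv, hJherm.eq]
  -- inverse of 2 • J
  have e2 : ((2 : ℝ) • J)⁻¹ = (2⁻¹ : ℝ) • J⁻¹ := by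
    refine Matrix.inv_eq_left_inv ?_
    rw [Matrix.smul_mul, Matrix.mul_smul, smul_smul, Matrix.nonsing_inv_mul _ hJdet]
    norm_num
  -- the difference matrix
  set M : Matrix (Fin (q - 1)) (Fin (q - 1)) ℝ := I - (4⁻¹ : ℝ) • I2 with hM
  have key : J⁻¹ * I * J⁻¹ - ((2 : ℝ) • J)⁻¹ * I2 * ((2 : ℝ) • J)⁻¹
      = (J⁻¹)ᴴ * M * J⁻¹ := by
    rw [e2, hJinvH, hM]
    rw [Matrix.smul_mul, Matrix.mul_smul, Matrix.smul_mul, smul_smul]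
    rw [Matrix.mul_sub, Matrix.sub_mul]
    congr 1
    norm_num
  rw [key]
  -- it remains to show M is PSD
  have hMpsd : M.PosSemidef := by
    refine Matrix.posSemidef_iff_dotProduct_mulVec.mpr ⟨?_, ?_⟩
    · rw [hM, hIdef, hI2def]
      have h1 : (Imat q hq ν).IsHermitian :=
        isHermitian_gen _ _ _ (fun C a b => by ring)
      have h2 : (I2mat q hq ν).IsHermitian :=
        isHermitian_gen _ _ _ (fun C a b => by ring)
      have h3 : ((4⁻¹ : ℝ) • I2mat q hq ν).IsHermitian := by
        show _ = _
        rw [Matrix.conjTranspose_smul, star_trivial, h2.eq]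
      exact h1.sub h3
    · intro x
      have hq1 : x ⬝ᵥ (I *ᵥ x)
          = ∑ C ∈ properCoalitions q, kernelProb q C * (shapResidual q hq ν C) ^ 2
              * (∑ i, Wvec q hq C i * x i) ^ 2 := by
        rw [hIdef]
        unfold Imat
        rw [dot_sum_mulVec]
        exact Finset.sum_congr rfl fun C _ => quad_single _ _ _ _
      have hq2 : x ⬝ᵥ (I2 *ᵥ x)
          = ∑ C ∈ properCoalitions q,
              kernelProb q C * (4 * (pairedResidual q hq ν C) ^ 2)
              * (∑ i, Wvec q hq C i * x i) ^ 2 := by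
        rw [hI2def]
        unfold I2mat
        rw [dot_sum_mulVec]
        exact Finset.sum_congr rfl fun C _ =>
          quad_single (kernelProb q C) (4 * (pairedResidual q hq ν C) ^ 2)
            (Wvec q hq C) x
      simp only [star_trivial]
      rw [hM, Matrix.sub_mulVec, dotProduct_sub, Matrix.smul_mulVec,
        dotProduct_smul, hq1, hq2]
      -- abbreviations
      set r := shapResidual q hq ν with hr
      set t : Finset (Fin q) → ℝ := fun C => (∑ i, Wvec q hq C i * x i) ^ 2 with ht
      -- reindexing by complement
      have hre : ∑ C ∈ properCoalitions q, kernelProb q C * r C ^ 2 * t C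
          = ∑ C ∈ properCoalitions q,
              kernelProb q C * r (Finset.univ \ C) ^ 2 * t C := by
        rw [sum_compl_reindex (fun C => kernelProb q C * r C ^ 2 * t C)]
        refine Finset.sum_congr rfl fun C hC => ?_
        rw [kernelProb_compl hq hC]
        congr 1
        rw [ht]
        simp only []
        have : ∑ i, Wvec q hq (Finset.univ \ C) i * x i
            = - ∑ i, Wvec q hq C i * x i := by
          rw [← Finset.sum_neg_distrib]
          exact Finset.sum_congr rfl fun i _ => by rw [Wvec_compl]; ring
        rw [this]
        ring
      simp only [star_trivial, smul_eq_mul]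
      have split : ∑ C ∈ properCoalitions q, kernelProb q C * r C ^ 2 * t C
            - 4⁻¹ * ∑ C ∈ properCoalitions q,
                kernelProb q C * (4 * (pairedResidual q hq ν C) ^ 2) * t C
          = ∑ C ∈ properCoalitions q,
              (2⁻¹ * (kernelProb q C * r C ^ 2 * t C)
                + 2⁻¹ * (kernelProb q C * r (Finset.univ \ C) ^ 2 * t C)
                - 4⁻¹ * (kernelProb q C * (4 * (pairedResidual q hq ν C) ^ 2) * t C)) := by
        rw [Finset.sum_sub_distrib, Finset.sum_add_distrib, ← Finset.mul_sum,
          ← Finset.mul_sum, ← Finset.mul_sum, ← hre]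
        ring
      rw [sub_nonneg] at *
      rw [← sub_nonneg, split]
      refine Finset.sum_nonneg fun C hC => ?_
      have hp := kernelProb_nonneg hq C
      have htn : 0 ≤ t C := sq_nonneg _
      rw [pairedResidual_eq hq ν C]
      nlinarith [sq_nonneg (r C + r (Finset.univ \ C)),
        mul_nonneg hp htn, sq_nonneg (r C - r (Finset.univ \ C))]
  exact hMpsd.conjTranspose_mul_mul_same J⁻¹
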